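/- Suppose (B̄,Ā) ∈ D̄ with m ≥ 1 satisfies hypothesis (∗∗), i_1 ≥ 2, i_m ≤ k̄, u⁻¹(ā_{i_m}) < u⁻¹(ā_{i_m+1}), and b̄_{j_1−1} < ā_{i_1−1}. Set Ã := Ā and B̃ := (b̄_{j_m}, b̄_{j_m+1})·(b̄_{j_1}, ā_{i_1−1})·B̄ (the cycle obtained from B̄ by removing b̄_{j_m} and inserting ā_{i_1−1} between b̄_{j_1−1} and b̄_{j_1}). Then (Ã,B̃) ∈ D, B̃·Ã = Ā·B̄, and the lengths of the defining index sequences satisfy k̃ + h̃ = k̄ + h̄. -/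

import Mathlib

/-!
Common setup: the symmetric group `S_n` (`n ≥ 2`) is modeled as `Equiv.Perm (Fin (n+2))`
(so every `n ≥ 2` is of the form `n+2` with `n : ℕ`).  The element `1` of `{1,…,n}` is
`0 : Fin (n+2)` and the element `n` is `Fin.last (n+1)`.
Composition of permutations is multiplication: `(C * C') x = C (C' x)`.
-/

open Equiv

namespace DblShortcut

variable {n : ℕ}

/-- The cycle `(n, a_k, …, a_1)` determined by the sequence `a_1, …, a_k`
(as `a : Fin k → Fin (n+2)`); when `k = 0` this is the identity. -/
def cycA {k : ℕ} (a : Fin k → Fin (n+2)) : Equiv.Perm (Fin (n+2)) :=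
  (Fin.last (n+1) :: (List.ofFn a).reverse).formPerm

/-- The cycle `(x, b_1, …, b_h)` determined by the base point `x` and the sequence
`b_1, …, b_h`; when `h = 0` this is the identity. -/
def cycB {h : ℕ} (x : Fin (n+2)) (b : Fin h → Fin (n+2)) : Equiv.Perm (Fin (n+2)) :=
  (x :: List.ofFn b).formPerm

/-- The length of the defining index sequence of a cycle as above:
`|support| - 1` (which is `0` for the identity, and `k` for `cycA a`, `h` for `cycB x b`). -/
def clen (C : Equiv.Perm (Fin (n+2))) : ℕ := C.support.card - 1

/-- The sequence `a_1, …, a_k` extended by `a_{k+1} := n`. -/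
def asnoc {k : ℕ} (a : Fin k → Fin (n+2)) : Fin (k+1) → Fin (n+2) :=
  Fin.snoc a (Fin.last (n+1))

/-- The sequence `b_1, …, b_h` prefixed by the base point `x` (`b_0 := x`). -/
def bcons {h : ℕ} (x : Fin (n+2)) (b : Fin h → Fin (n+2)) : Fin (h+1) → Fin (n+2) :=
  Fin.cons x b

/-- `a_t`, with the conventions `a_0 := n` and `a_{k+1} := n` (out-of-range values are `n`). -/
def aext {k : ℕ} (a : Fin k → Fin (n+2)) (t : ℕ) : Fin (n+2) :=
  if ht : 1 ≤ t ∧ t ≤ k then a ⟨t - 1, by omega⟩ else Fin.last (n+1)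

/-- `b_t`, with the conventions `b_0 := 1` and `b_{h+1} := 1` (out-of-range values are `1`). -/
def bext {h : ℕ} (b : Fin h → Fin (n+2)) (t : ℕ) : Fin (n+2) :=
  if ht : 1 ≤ t ∧ t ≤ h then b ⟨t - 1, by omega⟩ else 0

/-- Conditions (1) and (2) of the definition of `D` on the sequence `a_1 < … < a_k`:
`1 ≤ a_1 < … < a_k < n` and `v⁻¹(n) = u⁻¹(a_1) < u⁻¹(a_2) < … < u⁻¹(a_k) < u⁻¹(n)`
(with `v⁻¹(n) = u⁻¹(n)` when `k = 0`). -/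
def DCondA (u v : Perm (Fin (n+2))) {k : ℕ} (a : Fin k → Fin (n+2)) : Prop :=
  StrictMono a ∧ (∀ i, a i < Fin.last (n+1)) ∧
  v.symm (Fin.last (n+1)) = u.symm (asnoc a 0) ∧
  StrictMono fun i : Fin (k+1) => u.symm (asnoc a i)

/-- Conditions (3) and (4) of the definition of `D` on the sequence `b_1 < … < b_h`:
`1 < b_1 < … < b_h < n` and
`u⁻¹(A⁻¹(1)) < u⁻¹(A⁻¹(b_1)) < … < u⁻¹(A⁻¹(b_h)) = v⁻¹(1)`
(with `u⁻¹(A⁻¹(1)) = v⁻¹(1)` when `h = 0`). -/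
def DCondB (u v A : Perm (Fin (n+2))) {h : ℕ} (b : Fin h → Fin (n+2)) : Prop :=
  StrictMono b ∧ (∀ i, 0 < b i ∧ b i < Fin.last (n+1)) ∧
  (StrictMono fun i : Fin (h+1) => u.symm (A.symm (bcons 0 b i))) ∧
  u.symm (A.symm (bcons 0 b (Fin.last h))) = v.symm 0

/-- The set `D`: pairs `(A,B)` with `A = (n,a_k,…,a_1)`, `B = (1,b_1,…,b_h)`
satisfying conditions (1)–(4). -/
def memD (u v A B : Perm (Fin (n+2))) : Prop :=
  ∃ (k h : ℕ) (a : Fin k → Fin (n+2)) (b : Fin h → Fin (n+2)),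
    A = cycA a ∧ B = cycB 0 b ∧ DCondA u v a ∧ DCondB u v A b

/-- Conditions (a) and (b) of the definition of `D̄` on the sequence `b̄_1 < … < b̄_h̄`:
`1 < b̄_1 < … < b̄_h̄ ≤ n` and `u⁻¹(1) < u⁻¹(b̄_1) < … < u⁻¹(b̄_h̄) = v⁻¹(1)`
(with `u⁻¹(1) = v⁻¹(1)` when `h̄ = 0`). -/
def DbarCondB (u v : Perm (Fin (n+2))) {h : ℕ} (b : Fin h → Fin (n+2)) : Prop :=
  StrictMono b ∧ (∀ i, 0 < b i) ∧
  (StrictMono fun i : Fin (h+1) => u.symm (bcons 0 b i)) ∧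
  u.symm (bcons 0 b (Fin.last h)) = v.symm 0

/-- Conditions (c) and (d) of the definition of `D̄` on the sequence `ā_1 < … < ā_k̄`:
`1 ≤ ā_1 < … < ā_k̄ < n` and
`v⁻¹(n) = u⁻¹(B̄⁻¹(ā_1)) < … < u⁻¹(B̄⁻¹(ā_k̄)) < u⁻¹(B̄⁻¹(n))`
(with `v⁻¹(n) = u⁻¹(B̄⁻¹(n))` when `k̄ = 0`). -/
def DbarCondA (u v Bbar : Perm (Fin (n+2))) {k : ℕ} (a : Fin k → Fin (n+2)) : Prop :=
  StrictMono a ∧ (∀ i, a i < Fin.last (n+1)) ∧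
  v.symm (Fin.last (n+1)) = u.symm (Bbar.symm (asnoc a 0)) ∧
  StrictMono fun i : Fin (k+1) => u.symm (Bbar.symm (asnoc a i))

/-- The set `D̄`: pairs `(B̄,Ā)` with `B̄ = (1,b̄_1,…,b̄_h̄)`, `Ā = (n,ā_k̄,…,ā_1)`
satisfying conditions (a)–(d). -/
def memDbar (u v Bbar Abar : Perm (Fin (n+2))) : Prop :=
  ∃ (h k : ℕ) (b : Fin h → Fin (n+2)) (a : Fin k → Fin (n+2)),
    Bbar = cycB 0 b ∧ Abar = cycA a ∧ DbarCondB u v b ∧ DbarCondA u v Bbar a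

end DblShortcut

namespace DblShortcut

/-- Intersection data for `(A,B) ∈ D` with `m := |A_s ∩ B_s|`:
`A_s ∩ B_s = {c_1 < … < c_m}` and `c_l = a_{i_l} = b_{j_l}` with
`i_1 < … < i_m` in `{1,…,k}` and `j_1 < … < j_m` in `{0,1,…,h}`
(conventions `a_0 := n`, `b_0 := 1`, `a_{k+1} := n`, `b_{h+1} := 1`). -/
def InterD {n k h : ℕ} (a : Fin k → Fin (n+2)) (b : Fin h → Fin (n+2))
    {m : ℕ} (i j : Fin m → ℕ) : Prop :=
  StrictMono i ∧ StrictMono j ∧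
  (∀ l, 1 ≤ i l ∧ i l ≤ k) ∧ (∀ l, j l ≤ h) ∧
  (∀ l, aext a (i l) = bext b (j l)) ∧
  (cycA a).support ∩ (cycB 0 b).support
    = Finset.image (fun l => aext a (i l)) Finset.univ

/-- Intersection data for `(B̄,Ā) ∈ D̄` with `m := |Ā_s ∩ B̄_s|`:
`Ā_s ∩ B̄_s = {c̄_1 < … < c̄_m}` and `c̄_l = ā_{i_l} = b̄_{j_l}` with
`i_1 < … < i_m` in `{1,…,k̄+1}` and `j_1 < … < j_m` in `{1,…,h̄}`
(conventions `ā_0 := n`, `b̄_0 := 1`, `ā_{k̄+1} := n`, `b̄_{h̄+1} := 1`). -/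
def InterDbar {n h k : ℕ} (b : Fin h → Fin (n+2)) (a : Fin k → Fin (n+2))
    {m : ℕ} (i j : Fin m → ℕ) : Prop :=
  StrictMono i ∧ StrictMono j ∧
  (∀ l, 1 ≤ i l ∧ i l ≤ k + 1) ∧ (∀ l, 1 ≤ j l ∧ j l ≤ h) ∧
  (∀ l, aext a (i l) = bext b (j l)) ∧
  (cycA a).support ∩ (cycB 0 b).support
    = Finset.image (fun l => aext a (i l)) Finset.univ

/-- Hypothesis (∗) (resp. (∗∗)): consecutive intersection indices differ by `1`,
i.e. `i_{r+1} − i_r = 1` and `j_{r+1} − j_r = 1` for all `r ∈ {1,…,m−1}`. -/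
def StarHyp {m : ℕ} (i j : Fin m → ℕ) : Prop :=
  ∀ l : Fin m, ∀ hl : l.1 + 1 < m,
    i ⟨l.1 + 1, hl⟩ = i l + 1 ∧ j ⟨l.1 + 1, hl⟩ = j l + 1

end DblShortcut

namespace DblShortcut

section Helpers

variable {n : ℕ}

section B
variable {h : ℕ} {b : Fin h → Fin (n+2)}

lemma bext_zero (b : Fin h → Fin (n+2)) : bext b 0 = 0 := by simp [bext]

lemma bext_of_gt (t : ℕ) (ht : h < t) : bext b t = 0 := by
  rw [bext, dif_neg]; omega

lemma bext_eq {t : ℕ} (h1 : 1 ≤ t) (h2 : t ≤ h) : bext b t = b ⟨t-1, by omega⟩ :=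
  dif_pos ⟨h1, h2⟩

variable (hbm : StrictMono b) (hb0 : ∀ i, 0 < b i)
include hbm hb0

lemma bext_lt {t t' : ℕ} (htt : t < t') (ht' : t' ≤ h) :
    bext b t < bext b t' := by
  rw [bext_eq (by omega) ht']
  rcases Nat.eq_zero_or_pos t with rfl | h1
  · rw [bext_zero]; exact hb0 _
  · rw [bext_eq h1 (by omega)]
    exact hbm (by simp only [Fin.mk_lt_mk]; omega)

lemma bext_inj {t t' : ℕ} (ht : t ≤ h) (ht' : t' ≤ h) (he : bext b t = bext b t') :
    t = t' := by
  rcases lt_trichotomy t t' with hl | he' | hl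
  · exact absurd he (ne_of_lt (bext_lt hbm hb0 hl ht'))
  · exact he'
  · exact absurd he.symm (ne_of_lt (bext_lt hbm hb0 hl ht))

omit hbm hb0 in
lemma blist_get {t : ℕ} (ht : t < h+1) :
    (0 :: List.ofFn b)[t]'(by simpa using ht) = bext b t := by
  rcases Nat.eq_zero_or_pos t with rfl | h1
  · simp [bext_zero]
  · rw [bext_eq h1 (by omega)]
    rcases t with _ | t
    · omega
    · simp

lemma blist_nodup : (0 :: List.ofFn b).Nodup := by
  refine List.nodup_cons.mpr ⟨?_, ?_⟩
  · simp only [List.mem_ofFn, Set.mem_range, not_exists]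
    intro i hi; exact absurd hi.symm (ne_of_lt (hb0 i))
  · exact List.nodup_ofFn.mpr hbm.injective

omit hbm hb0 in
lemma mem_blist_iff {x : Fin (n+2)} :
    x ∈ (0 :: List.ofFn b) ↔ ∃ t, t ≤ h ∧ bext b t = x := by
  simp only [List.mem_cons, List.mem_ofFn, Set.mem_range]
  constructor
  · rintro (rfl | ⟨i, rfl⟩)
    · exact ⟨0, by omega, bext_zero b⟩
    · refine ⟨i.1 + 1, by omega, ?_⟩
      rw [bext_eq (by omega) (by omega)]
      exact congrArg b (Fin.ext (by simp))
  · rintro ⟨t, ht, rfl⟩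
    rcases Nat.eq_zero_or_pos t with rfl | h1
    · left; exact (bext_zero b).symm
    · right; exact ⟨⟨t-1, by omega⟩, (bext_eq h1 ht).symm⟩

lemma cycB_bext {t : ℕ} (ht : t ≤ h) : cycB 0 b (bext b t) = bext b (t+1) := by
  rcases eq_or_lt_of_le ht with rfl | hlt
  · have key := List.formPerm_apply_getElem (0 :: List.ofFn b) (blist_nodup hbm hb0) t
      (by simp)
    simp only [List.length_cons, List.length_ofFn, Nat.mod_self] at key
    rw [blist_get (by omega), blist_get (by omega)] at key
    rw [cycB, key, bext_zero, bext_of_gt (t+1) (by omega)]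
  · have key := List.formPerm_apply_lt_getElem (0 :: List.ofFn b) (blist_nodup hbm hb0) t
      (by simp; omega)
    rw [blist_get (by omega), blist_get (by omega)] at key
    exact key

omit hbm hb0 in
lemma cycB_fix {x : Fin (n+2)} (hx : x ∉ (0 :: List.ofFn b)) : cycB 0 b x = x :=
  List.formPerm_apply_of_notMem hx

lemma support_cycB (hh : 1 ≤ h) :
    (cycB 0 b).support = (0 :: List.ofFn b).toFinset := by
  rw [cycB]
  refine List.support_formPerm_of_nodup _ (blist_nodup hbm hb0) ?_
  intro y hy
  apply_fun List.length at hy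
  simp at hy; omega

lemma mem_support_cycB (hh : 1 ≤ h) {x : Fin (n+2)} :
    x ∈ (cycB 0 b).support ↔ ∃ t, t ≤ h ∧ bext b t = x := by
  rw [support_cycB hbm hb0 hh, List.mem_toFinset, mem_blist_iff]

lemma card_support_cycB (hh : 1 ≤ h) : (cycB 0 b).support.card = h + 1 := by
  rw [support_cycB hbm hb0 hh, List.toFinset_card_of_nodup (blist_nodup hbm hb0)]
  simp

end B

section A
variable {k : ℕ} {a : Fin k → Fin (n+2)}

lemma aext_out {t : ℕ} (ht : ¬(1 ≤ t ∧ t ≤ k)) : aext a t = Fin.last (n+1) :=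
  dif_neg ht

lemma aext_eq {t : ℕ} (h1 : 1 ≤ t) (h2 : t ≤ k) : aext a t = a ⟨t-1, by omega⟩ :=
  dif_pos ⟨h1, h2⟩

variable (ham : StrictMono a) (hal : ∀ i, a i < Fin.last (n+1))
include ham hal

lemma aext_lt {t t' : ℕ} (h1 : 1 ≤ t) (htt : t < t') (ht' : t' ≤ k+1) :
    aext a t < aext a t' := by
  rw [aext_eq h1 (by omega)]
  rcases eq_or_lt_of_le ht' with rfl | hk
  · rw [aext_out (by omega)]; exact hal _
  · rw [aext_eq (by omega) (by omega)]
    exact ham (by simp only [Fin.mk_lt_mk]; omega)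

lemma aext_inj {t t' : ℕ} (h1 : 1 ≤ t) (ht : t ≤ k+1) (h1' : 1 ≤ t') (ht' : t' ≤ k+1)
    (he : aext a t = aext a t') : t = t' := by
  rcases lt_trichotomy t t' with hl | he' | hl
  · exact absurd he (ne_of_lt (aext_lt ham hal h1 hl ht'))
  · exact he'
  · exact absurd he.symm (ne_of_lt (aext_lt ham hal h1' hl ht))

omit ham hal in
lemma alist_get {s : ℕ} (hs : s < k+1) :
    (Fin.last (n+1) :: (List.ofFn a).reverse)[s]'(by simpa using hs) = aext a (k+1-s) := by
  rcases Nat.eq_zero_or_pos s with rfl | h1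
  · rw [List.getElem_cons_zero, aext_out (by omega)]
  · rcases s with _ | s
    · omega
    · rw [List.getElem_cons_succ, List.getElem_reverse, List.getElem_ofFn,
        aext_eq (by omega) (by omega)]
      exact congrArg a (Fin.ext (by simp; omega))

lemma alist_nodup : (Fin.last (n+1) :: (List.ofFn a).reverse).Nodup := by
  refine List.nodup_cons.mpr ⟨?_, ?_⟩
  · simp only [List.mem_reverse, List.mem_ofFn, Set.mem_range, not_exists]
    intro i hi; exact absurd hi (ne_of_lt (hal i))
  · exact List.nodup_reverse.mpr (List.nodup_ofFn.mpr ham.injective)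

omit ham hal in
lemma mem_alist_iff {x : Fin (n+2)} :
    x ∈ (Fin.last (n+1) :: (List.ofFn a).reverse) ↔
      ∃ t, 1 ≤ t ∧ t ≤ k+1 ∧ aext a t = x := by
  simp only [List.mem_cons, List.mem_reverse, List.mem_ofFn, Set.mem_range]
  constructor
  · rintro (rfl | ⟨i, rfl⟩)
    · exact ⟨k+1, by omega, by omega, aext_out (by omega)⟩
    · refine ⟨i.1 + 1, by omega, by omega, ?_⟩
      rw [aext_eq (by omega) (by omega)]
      exact congrArg a (Fin.ext (by simp))
  · rintro ⟨t, h1, h2, rfl⟩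
    rcases eq_or_lt_of_le h2 with rfl | hk
    · left
      rw [aext_out (by omega)]
    · right
      refine ⟨⟨t-1, by omega⟩, ?_⟩
      exact (aext_eq h1 (by omega)).symm

lemma cycA_aext {t : ℕ} (h1 : 1 ≤ t) (h2 : t ≤ k+1) :
    cycA a (aext a t) = aext a (t-1) := by
  have hlen : (Fin.last (n+1) :: (List.ofFn a).reverse).length = k + 1 := by simp
  rcases eq_or_lt_of_le h1 with rfl | hlt
  · -- t = 1, index s = k
    have key := List.formPerm_apply_getElem (Fin.last (n+1) :: (List.ofFn a).reverse)
      (alist_nodup ham hal) k (by simp)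
    simp only [List.length_cons, List.length_reverse, List.length_ofFn, Nat.mod_self] at key
    rw [alist_get (by omega), alist_get (by omega)] at key
    have e1 : k + 1 - k = 1 := by omega
    have e2 : k + 1 - 0 = k + 1 := by omega
    rw [e1, e2] at key
    rw [cycA, key, aext_out (by omega), aext_out (by omega)]
  · -- t ≥ 2, index s = k+1-t, s+1 = k+2-t < k+1
    have key := List.formPerm_apply_lt_getElem (Fin.last (n+1) :: (List.ofFn a).reverse)
      (alist_nodup ham hal) (k+1-t) (by simp; omega)
    rw [alist_get (by omega), alist_get (by omega)] at key
    have e1 : k + 1 - (k+1-t) = t := by omega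
    have e2 : k + 1 - (k+1-t+1) = t - 1 := by omega
    rw [e1, e2] at key
    rw [cycA, key]

omit ham hal in
lemma cycA_fix {x : Fin (n+2)} (hx : x ∉ (Fin.last (n+1) :: (List.ofFn a).reverse)) :
    cycA a x = x :=
  List.formPerm_apply_of_notMem hx

lemma support_cycA (hk : 1 ≤ k) :
    (cycA a).support = (Fin.last (n+1) :: (List.ofFn a).reverse).toFinset := by
  rw [cycA]
  refine List.support_formPerm_of_nodup _ (alist_nodup ham hal) ?_
  intro y hy
  apply_fun List.length at hy
  simp at hy; omega

lemma mem_support_cycA (hk : 1 ≤ k) {x : Fin (n+2)} :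
    x ∈ (cycA a).support ↔ ∃ t, 1 ≤ t ∧ t ≤ k+1 ∧ aext a t = x := by
  rw [support_cycA ham hal hk, List.mem_toFinset, mem_alist_iff]

lemma card_support_cycA (hk : 1 ≤ k) : (cycA a).support.card = k + 1 := by
  rw [support_cycA ham hal hk, List.toFinset_card_of_nodup (alist_nodup ham hal)]
  simp

lemma cycA_symm_aext {t : ℕ} (h2 : t ≤ k) :
    (cycA a).symm (aext a t) = aext a (t+1) := by
  rw [Equiv.symm_apply_eq, cycA_aext ham hal (by omega) (by omega)]
  simp

omit ham hal in
lemma cycA_symm_fix {x : Fin (n+2)}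
    (hx : x ∉ (Fin.last (n+1) :: (List.ofFn a).reverse)) :
    (cycA a).symm x = x := by
  rw [Equiv.symm_apply_eq, cycA_fix hx]

end A

lemma bcons_eq_bext {h : ℕ} (b : Fin h → Fin (n+2)) (i : Fin (h+1)) :
    bcons 0 b i = bext b i.1 := by
  induction i using Fin.cases with
  | zero => simp [bcons, bext_zero]
  | succ j =>
    have e : (j.succ : Fin (h+1)).1 = j.1 + 1 := rfl
    rw [bcons, Fin.cons_succ, e, bext_eq (by omega) (by omega)]
    exact congrArg b (Fin.ext (by simp))

lemma asnoc_eq_aext {k : ℕ} (a : Fin k → Fin (n+2)) (i : Fin (k+1)) :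
    asnoc a i = aext a (i.1+1) := by
  induction i using Fin.lastCases with
  | last =>
    have e : (Fin.last k : Fin (k+1)).1 = k := rfl
    rw [asnoc, Fin.snoc_last, e, aext_out (by omega)]
  | cast j =>
    have e : (j.castSucc : Fin (k+1)).1 = j.1 := rfl
    rw [asnoc, Fin.snoc_castSucc, e, aext_eq (by omega) (by omega)]
    exact congrArg a (Fin.ext (by simp))

lemma bcons_nat_lt {α : Type*} [Preorder α] {h : ℕ} {b : Fin h → Fin (n+2)}
    {f : Fin (n+2) → α} (hf : StrictMono fun i : Fin (h+1) => f (bcons 0 b i))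
    {s s' : ℕ} (h1 : s < s') (h2 : s' ≤ h) : f (bext b s) < f (bext b s') := by
  have key : ∀ t (ht : t ≤ h), bcons 0 b ⟨t, by omega⟩ = bext b t := by
    intro t ht
    rw [bcons_eq_bext]
  have h3 := hf (show (⟨s, by omega⟩ : Fin (h+1)) < ⟨s', by omega⟩ from by
    simp only [Fin.mk_lt_mk]; omega)
  dsimp only at h3
  rwa [key s (by omega), key s' h2] at h3

lemma asnoc_nat_lt {α : Type*} [Preorder α] {k : ℕ} {a : Fin k → Fin (n+2)}
    {f : Fin (n+2) → α} (hf : StrictMono fun i : Fin (k+1) => f (asnoc a i))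
    {t t' : ℕ} (h1 : 1 ≤ t) (h2 : t < t') (h3 : t' ≤ k+1) :
    f (aext a t) < f (aext a t') := by
  have key : ∀ t (h1 : 1 ≤ t) (ht : t ≤ k+1), asnoc a ⟨t-1, by omega⟩ = aext a t := by
    intro t h1 ht
    rw [asnoc_eq_aext]
    show aext a (t - 1 + 1) = aext a t
    congr 1
    omega
  have h4 := hf (show (⟨t-1, by omega⟩ : Fin (k+1)) < ⟨t'-1, by omega⟩ from by
    simp only [Fin.mk_lt_mk]; omega)
  dsimp only at h4
  rwa [key t h1 (by omega), key t' (by omega) h3] at h4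

end Helpers

/-- case 1' of the definition of `ψ`.  Suppose `(B̄,Ā) ∈ D̄` with `m ≥ 1`
satisfies (∗∗), `i_1 ≥ 2`, `i_m ≤ k̄`, `u⁻¹(ā_{i_m}) < u⁻¹(ā_{i_m+1})` and
`b̄_{j_1−1} < ā_{i_1−1}`.  With `Ã := Ā` and
`B̃ := (b̄_{j_m}, b̄_{j_m+1})·(b̄_{j_1}, ā_{i_1−1})·B̄`, one has `(Ã,B̃) ∈ D`,
`B̃·Ã = Ā·B̄` and `k̃ + h̃ = k̄ + h̄`. -/
theorem statement7 (n : ℕ) (u v : Equiv.Perm (Fin (n+2))) (h k : ℕ)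
    (b : Fin h → Fin (n+2)) (a : Fin k → Fin (n+2))
    (hB : DbarCondB u v b) (hA : DbarCondA u v (cycB 0 b) a)
    (m : ℕ) (hm : 0 < m) (i j : Fin m → ℕ)
    (hinter : InterDbar b a i j) (hstar : StarHyp i j)
    (hi1 : 2 ≤ i ⟨0, hm⟩)
    (him : i ⟨m - 1, by omega⟩ ≤ k)
    (hpos : u.symm (aext a (i ⟨m - 1, by omega⟩)) < u.symm (aext a (i ⟨m - 1, by omega⟩ + 1)))
    (hcmp : bext b (j ⟨0, hm⟩ - 1) < aext a (i ⟨0, hm⟩ - 1)) :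
    ∀ At Bt : Equiv.Perm (Fin (n+2)),
      At = cycA a →
      Bt = Equiv.swap (bext b (j ⟨m - 1, by omega⟩)) (bext b (j ⟨m - 1, by omega⟩ + 1)) *
            (Equiv.swap (bext b (j ⟨0, hm⟩)) (aext a (i ⟨0, hm⟩ - 1)) * cycB 0 b) →
      memD u v At Bt ∧ Bt * At = cycA a * cycB 0 b ∧ clen At + clen Bt = k + h := by
  intro At Bt hAt hBt
  subst hAt
  have hm1 : m - 1 < m := by omega
  obtain ⟨hbm, hb0, hU, hUlast⟩ := hB
  obtain ⟨ham, hal, hveq, hG⟩ := hA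
  obtain ⟨himono, hjmono, hik, hjh, heql, hsupp⟩ := hinter
  obtain ⟨p, hpdef⟩ : ∃ p, p = i ⟨0, hm⟩ := ⟨_, rfl⟩
  obtain ⟨q, hqdef⟩ : ∃ q, q = j ⟨0, hm⟩ := ⟨_, rfl⟩
  have hIJ : ∀ t : ℕ, ∀ ht : t < m, i ⟨t, ht⟩ = p + t ∧ j ⟨t, ht⟩ = q + t := by
    intro t
    induction t with
    | zero =>
      intro ht
      have e : (⟨0, ht⟩ : Fin m) = ⟨0, hm⟩ := rfl
      rw [e]
      omega
    | succ s IH =>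
      intro ht
      have hs : s < m := by omega
      obtain ⟨e1, e2⟩ := IH hs
      have f := hstar ⟨s, hs⟩ ht
      have f1 : i ⟨s+1, ht⟩ = i ⟨s, hs⟩ + 1 := f.1
      have f2 : j ⟨s+1, ht⟩ = j ⟨s, hs⟩ + 1 := f.2
      omega
  have hq1 : 1 ≤ q := by have h1 := (hjh ⟨0, hm⟩).1; omega
  have hp2 : 2 ≤ p := by rw [hpdef]; exact hi1
  have hpk : p + (m-1) ≤ k := by
    have h1 := (hIJ (m-1) hm1).1
    have h2 : i ⟨m-1, hm1⟩ ≤ k := him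
    omega
  have hqh : q + (m-1) ≤ h := by
    have h1 := (hIJ (m-1) hm1).2
    have h2 := hjh ⟨m-1, hm1⟩
    omega
  have hk1 : 1 ≤ k := by omega
  have hh1 : 1 ≤ h := by omega
  have hpos2 : u.symm (aext a (p + (m-1))) < u.symm (aext a (p + (m-1) + 1)) := by
    have h1 := (hIJ (m-1) hm1).1
    have h2 : u.symm (aext a (i ⟨m-1, hm1⟩)) < u.symm (aext a (i ⟨m-1, hm1⟩ + 1)) := hpos
    rwa [h1] at h2
  have hcmp2 : bext b (q-1) < aext a (p-1) := by rw [hpdef, hqdef]; exact hcmp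
  have hBt2 : Bt = Equiv.swap (bext b (q + (m-1))) (bext b (q + (m-1) + 1)) *
      (Equiv.swap (bext b q) (aext a (p-1)) * cycB 0 b) := by
    have h1 := (hIJ (m-1) hm1).2
    have h2 : Bt = Equiv.swap (bext b (j ⟨m-1, hm1⟩)) (bext b (j ⟨m-1, hm1⟩ + 1)) *
        (Equiv.swap (bext b (j ⟨0, hm⟩)) (aext a (i ⟨0, hm⟩ - 1)) * cycB 0 b) := hBt
    rw [h1, ← hpdef, ← hqdef] at h2
    exact h2
  have hab : ∀ t, t < m → aext a (p + t) = bext b (q + t) := by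
    intro t ht
    have h1 := heql ⟨t, ht⟩
    rw [(hIJ t ht).1, (hIJ t ht).2] at h1
    exact h1
  have hab0 : aext a p = bext b q := by
    have h1 := hab 0 (by omega)
    simpa using h1
  have hxmem : ∀ x, x ∈ (cycA a).support → x ∈ (cycB 0 b).support →
      ∃ t, t < m ∧ aext a (p + t) = x := by
    intro x h1 h2
    have hx : x ∈ Finset.image (fun l => aext a (i l)) Finset.univ := by
      rw [← hsupp]; exact Finset.mem_inter.mpr ⟨h1, h2⟩
    obtain ⟨l, -, he⟩ := Finset.mem_image.mp hx
    refine ⟨l.1, l.2, ?_⟩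
    rw [← (hIJ l.1 l.2).1]
    exact he
  have hbA : ∀ s, s ≤ h → (∀ t, t < m → s ≠ q + t) →
      bext b s ∉ (Fin.last (n+1) :: (List.ofFn a).reverse) := by
    intro s hs hsne hmem
    have h1 : bext b s ∈ (cycA a).support :=
      (mem_support_cycA ham hal hk1).mpr (mem_alist_iff.mp hmem)
    have h2 : bext b s ∈ (cycB 0 b).support :=
      (mem_support_cycB hbm hb0 hh1).mpr ⟨s, hs, rfl⟩
    obtain ⟨t, ht, he⟩ := hxmem _ h1 h2
    rw [hab t ht] at he
    exact hsne t ht (bext_inj hbm hb0 (by omega) hs he).symm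
  have haB : ∀ t, 1 ≤ t → t ≤ k+1 → (∀ l, l < m → t ≠ p + l) →
      aext a t ∉ (0 :: List.ofFn b) := by
    intro t h1 h2 hne hmem
    have m1 : aext a t ∈ (cycB 0 b).support :=
      (mem_support_cycB hbm hb0 hh1).mpr (mem_blist_iff.mp hmem)
    have m2 : aext a t ∈ (cycA a).support :=
      (mem_support_cycA ham hal hk1).mpr ⟨t, h1, h2, rfl⟩
    obtain ⟨l, hl, he⟩ := hxmem _ m2 m1
    exact hne l hl (aext_inj ham hal (by omega) (by omega) h1 h2 he).symm
  have hblast : ∀ s, s ≤ h → bext b s ≠ Fin.last (n+1) := by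
    intro s hs he
    by_cases hc : ∀ t, t < m → s ≠ q + t
    · exact hbA s hs hc (by rw [he]; exact List.mem_cons_self)
    · push_neg at hc
      obtain ⟨t, ht, rfl⟩ := hc
      rw [← hab t ht, aext_eq (by omega) (by omega)] at he
      exact absurd he (ne_of_lt (hal _))
  have hane : aext a (p-1) ∉ (0 :: List.ofFn b) :=
    haB (p-1) (by omega) (by omega) (fun l hl => by omega)
  have han0 : (0 : Fin (n+2)) < aext a (p-1) := lt_of_le_of_lt (Fin.zero_le _) hcmp2
  have hbne' : ∀ s s', 1 ≤ s → s ≤ h+1 → 1 ≤ s' → s' ≤ h+1 → s ≠ s' →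
      bext b s ≠ bext b s' := by
    intro s s' h1 h2 h1' h2' hne he
    rcases Nat.lt_or_ge s (h+1) with hs | hs
    · rcases Nat.lt_or_ge s' (h+1) with hs' | hs'
      · exact hne (bext_inj hbm hb0 (by omega) (by omega) he)
      · rw [bext_of_gt s' (by omega), bext_eq h1 (by omega)] at he
        exact absurd he (ne_of_gt (hb0 _))
    · rw [bext_of_gt s (by omega), bext_eq h1' (by omega)] at he
      exact absurd he.symm (ne_of_gt (hb0 _))
  have habne : ∀ s, s ≤ h+1 → bext b s ≠ aext a (p-1) := by
    intro s hs he
    rcases Nat.lt_or_ge h s with hs' | hs'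
    · rw [bext_of_gt s (by omega)] at he
      exact absurd he.symm (ne_of_gt han0)
    · exact hane (by rw [← he]; exact mem_blist_iff.mpr ⟨s, by omega, rfl⟩)
  have hnotb : ∀ x : Fin (n+2), (¬∃ t, t ≤ h ∧ bext b t = x) → ∀ s, s ≤ h+1 →
      bext b s ≠ x := by
    intro x hx s hs he
    rcases Nat.lt_or_ge h s with h2 | h2
    · rw [bext_of_gt s h2, ← bext_zero b] at he
      exact hx ⟨0, by omega, he⟩
    · exact hx ⟨s, h2, he⟩
  have h0A : (0 : Fin (n+2)) ∉ (Fin.last (n+1) :: (List.ofFn a).reverse) := by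
    have h1 := hbA 0 (by omega) (fun t ht => by omega)
    rwa [bext_zero] at h1
  -- the modified sequence
  obtain ⟨btil, hbtil⟩ : ∃ f : ℕ → Fin (n+2), f = fun t =>
      if t < q then bext b t
      else if t = q then aext a (p-1)
      else if t ≤ q + (m-1) then bext b (t-1)
      else bext b t := ⟨_, rfl⟩
  obtain ⟨bt, hbtdef⟩ : ∃ bt : Fin h → Fin (n+2), bt = fun s => btil (s.1+1) := ⟨_, rfl⟩
  have hbtil_lt : ∀ t, t < q → btil t = bext b t := by
    intro t ht; simp only [hbtil]; split_ifs <;> first | rfl | omega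
  have hbtil_q : btil q = aext a (p-1) := by
    simp only [hbtil]; split_ifs <;> first | rfl | omega
  have hbtil_mid : ∀ t, q < t → t ≤ q + (m-1) → btil t = bext b (t-1) := by
    intro t h1 h2; simp only [hbtil]; split_ifs <;> first | rfl | omega
  have hbtil_gt : ∀ t, q + (m-1) < t → btil t = bext b t := by
    intro t h1; simp only [hbtil]; split_ifs <;> first | rfl | omega
  have hbtval : ∀ t, 1 ≤ t → t ≤ h → bext bt t = btil t := by
    intro t h1 h2
    rw [bext_eq h1 h2, hbtdef]
    show btil (t - 1 + 1) = btil t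
    congr 1
    omega
  have hbt_lt : ∀ t, t < q → bext bt t = bext b t := by
    intro t ht
    rcases Nat.eq_zero_or_pos t with rfl | h1
    · rw [bext_zero, bext_zero]
    · rw [hbtval t h1 (by omega), hbtil_lt t ht]
  have hbt_q : bext bt q = aext a (p-1) := by
    rw [hbtval q hq1 (by omega), hbtil_q]
  have hbt_mid : ∀ t, q < t → t ≤ q + (m-1) → bext bt t = bext b (t-1) := by
    intro t h1 h2
    rw [hbtval t (by omega) (by omega), hbtil_mid t h1 h2]
  have hbt_gt : ∀ t, q + (m-1) < t → bext bt t = bext b t := by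
    intro t h1
    rcases Nat.lt_or_ge h t with hh | hh
    · rw [bext_of_gt t hh, bext_of_gt t hh]
    · rw [hbtval t (by omega) hh, hbtil_gt t h1]
  have hbtilpos : ∀ t, 1 ≤ t → t ≤ h → 0 < btil t := by
    intro t h1 h2
    by_cases c1 : t < q
    · rw [hbtil_lt t c1, bext_eq h1 h2]; exact hb0 _
    by_cases c2 : t = q
    · rw [c2, hbtil_q]; exact han0
    by_cases c3 : t ≤ q + (m-1)
    · rw [hbtil_mid t (by omega) c3, bext_eq (by omega) (by omega)]; exact hb0 _
    · rw [hbtil_gt t (by omega), bext_eq h1 h2]; exact hb0 _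
  have hbtillast : ∀ t, 1 ≤ t → t ≤ h → btil t < Fin.last (n+1) := by
    intro t h1 h2
    by_cases c1 : t < q
    · rw [hbtil_lt t c1]; exact lt_of_le_of_ne (Fin.le_last _) (hblast t h2)
    by_cases c2 : t = q
    · rw [c2, hbtil_q, aext_eq (by omega) (by omega)]; exact hal _
    by_cases c3 : t ≤ q + (m-1)
    · rw [hbtil_mid t (by omega) c3]
      exact lt_of_le_of_ne (Fin.le_last _) (hblast (t-1) (by omega))
    · rw [hbtil_gt t (by omega)]
      exact lt_of_le_of_ne (Fin.le_last _) (hblast t h2)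
  have hbtpos : ∀ s : Fin h, 0 < bt s := by
    intro s; rw [hbtdef]; exact hbtilpos (s.1+1) (by omega) (by omega)
  have hbtlast : ∀ s : Fin h, bt s < Fin.last (n+1) := by
    intro s; rw [hbtdef]; exact hbtillast (s.1+1) (by omega) (by omega)
  have hbtilchain : ∀ t, 1 ≤ t → t + 1 ≤ h → btil t < btil (t+1) := by
    intro t h1 h2
    by_cases c1 : t + 1 < q
    · rw [hbtil_lt t (by omega), hbtil_lt (t+1) c1]
      exact bext_lt hbm hb0 (by omega) (by omega)
    by_cases c2 : t + 1 = q
    · rw [hbtil_lt t (by omega), c2, hbtil_q]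
      have e : t = q - 1 := by omega
      rw [e]
      exact hcmp2
    by_cases c3 : t = q
    · rw [c3, hbtil_q]
      by_cases c4 : q + 1 ≤ q + (m-1)
      · rw [hbtil_mid (q+1) (by omega) c4]
        have e : q + 1 - 1 = q := by omega
        rw [e, ← hab0]
        exact aext_lt ham hal (by omega) (by omega) (by omega)
      · rw [hbtil_gt (q+1) (by omega)]
        calc aext a (p-1) < aext a p := aext_lt ham hal (by omega) (by omega) (by omega)
          _ = bext b q := hab0
          _ < bext b (q+1) := bext_lt hbm hb0 (by omega) (by omega)
    by_cases c5 : t + 1 ≤ q + (m-1)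
    · rw [hbtil_mid t (by omega) (by omega), hbtil_mid (t+1) (by omega) c5]
      have e : t + 1 - 1 = t := by omega
      rw [e]
      exact bext_lt hbm hb0 (by omega) (by omega)
    by_cases c6 : t ≤ q + (m-1)
    · rw [hbtil_mid t (by omega) c6, hbtil_gt (t+1) (by omega)]
      exact bext_lt hbm hb0 (by omega) (by omega)
    · rw [hbtil_gt t (by omega), hbtil_gt (t+1) (by omega)]
      exact bext_lt hbm hb0 (by omega) (by omega)
  have hbtilmono : ∀ d s, 1 ≤ s → s + d + 1 ≤ h → btil s < btil (s + d + 1) := by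
    intro d
    induction d with
    | zero => intro s h1 h2; exact hbtilchain s h1 (by omega)
    | succ e IH =>
      intro s h1 h2
      have k1 := IH s h1 (by omega)
      have k2 := hbtilchain (s + e + 1) (by omega) (by omega)
      have e2 : s + (e+1) + 1 = (s + e + 1) + 1 := by omega
      rw [e2]
      exact lt_trans k1 k2
  have hbtilmono' : ∀ s t, 1 ≤ s → s < t → t ≤ h → btil s < btil t := by
    intro s t h1 h2 h3
    have k1 := hbtilmono (t - s - 1) s h1 (by omega)
    have e : s + (t - s - 1) + 1 = t := by omega
    rwa [e] at k1
  have hbtmono : StrictMono bt := by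
    intro s s' hss
    have hv : s.1 < s'.1 := hss
    have k1 := hbtilmono' (s.1+1) (s'.1+1) (by omega) (by omega) (by omega)
    rw [hbtdef]
    exact k1
  have hAmap : ∀ t, t ≤ h → cycA a (bext b t) = bext bt t := by
    intro t ht
    by_cases hc : ∃ l, l < m ∧ t = q + l
    · obtain ⟨l, hl, rfl⟩ := hc
      rw [← hab l hl, cycA_aext ham hal (by omega) (by omega)]
      rcases Nat.eq_zero_or_pos l with rfl | hl1
      · have e1 : p + 0 - 1 = p - 1 := by omega
        have e2 : q + 0 = q := by omega
        rw [e1, e2, hbt_q]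
      · have e : q + l - 1 = q + (l-1) := by omega
        rw [hbt_mid (q+l) (by omega) (by omega), e, ← hab (l-1) (by omega)]
        congr 1
        omega
    · push_neg at hc
      have h1 : bext b t ∉ (Fin.last (n+1) :: (List.ofFn a).reverse) := hbA t ht hc
      rw [cycA_fix h1]
      rcases Nat.lt_or_ge t q with h2 | h2
      · rw [hbt_lt t h2]
      · have h3 : q + (m-1) < t := by
          by_contra h4
          push_neg at h4
          exact hc (t - q) (by omega) (by omega)
        rw [hbt_gt t h3]
  have hAmap' : ∀ t, t ≤ h → (cycA a).symm (bext bt t) = bext b t := by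
    intro t ht; rw [← hAmap t ht, Equiv.symm_apply_apply]
  -- Bt is the cycle of the modified sequence
  have hBtEq : Bt = cycB 0 bt := by
    rw [hBt2]
    refine Equiv.ext fun x => ?_
    rw [Equiv.Perm.mul_apply, Equiv.Perm.mul_apply]
    by_cases hx : ∃ t, t ≤ h ∧ bext b t = x
    · obtain ⟨t, ht, rfl⟩ := hx
      rw [cycB_bext hbm hb0 ht]
      by_cases c1 : t + 1 < q
      · rw [Equiv.swap_apply_of_ne_of_ne
            (hbne' (t+1) q (by omega) (by omega) (by omega) (by omega) (by omega))
            (habne (t+1) (by omega)),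
          Equiv.swap_apply_of_ne_of_ne
            (hbne' (t+1) (q+(m-1)) (by omega) (by omega) (by omega) (by omega) (by omega))
            (hbne' (t+1) (q+(m-1)+1) (by omega) (by omega) (by omega) (by omega) (by omega)),
          ← hbt_lt t (by omega), cycB_bext hbtmono hbtpos ht, hbt_lt (t+1) c1]
      by_cases c2 : t + 1 = q
      · rw [c2, Equiv.swap_apply_left,
          Equiv.swap_apply_of_ne_of_ne (Ne.symm (habne (q+(m-1)) (by omega)))
            (Ne.symm (habne (q+(m-1)+1) (by omega))),
          ← hbt_lt t (by omega), cycB_bext hbtmono hbtpos ht, c2, hbt_q]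
      by_cases c3 : t < q + (m-1)
      · rw [Equiv.swap_apply_of_ne_of_ne
            (hbne' (t+1) q (by omega) (by omega) (by omega) (by omega) (by omega))
            (habne (t+1) (by omega))]
        by_cases c4 : t + 1 = q + (m-1)
        · have e1 : bext bt (t+1) = bext b t := by
            rw [hbt_mid (t+1) (by omega) (by omega), show t+1-1 = t from by omega]
          rw [c4, Equiv.swap_apply_left, ← e1, cycB_bext hbtmono hbtpos (by omega),
            hbt_gt (t+1+1) (by omega), c4]
        · have e1 : bext bt (t+1) = bext b t := by
            rw [hbt_mid (t+1) (by omega) (by omega), show t+1-1 = t from by omega]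
          have e2 : bext bt (t+1+1) = bext b (t+1) := by
            rw [hbt_mid (t+1+1) (by omega) (by omega), show t+1+1-1 = t+1 from by omega]
          rw [Equiv.swap_apply_of_ne_of_ne
              (hbne' (t+1) (q+(m-1)) (by omega) (by omega) (by omega) (by omega) (by omega))
              (hbne' (t+1) (q+(m-1)+1) (by omega) (by omega) (by omega) (by omega) (by omega)),
            ← e1, cycB_bext hbtmono hbtpos (by omega), e2]
      by_cases c5 : t = q + (m-1)
      · subst c5
        rw [Equiv.swap_apply_of_ne_of_ne
            (hbne' (q+(m-1)+1) q (by omega) (by omega) (by omega) (by omega) (by omega))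
            (habne (q+(m-1)+1) (by omega)),
          Equiv.swap_apply_right]
        have hnot : cycB 0 bt (bext b (q+(m-1))) = bext b (q+(m-1)) := by
          apply cycB_fix
          rw [mem_blist_iff]
          rintro ⟨t', ht', he⟩
          rcases Nat.lt_or_ge t' q with d1 | d1
          · rw [hbt_lt t' d1] at he
            have := bext_inj hbm hb0 (by omega) (by omega) he
            omega
          by_cases d2 : t' = q
          · rw [d2, hbt_q] at he
            exact habne (q+(m-1)) (by omega) he.symm
          by_cases d3 : t' ≤ q + (m-1)
          · rw [hbt_mid t' (by omega) d3] at he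
            have := bext_inj hbm hb0 (by omega) (by omega) he
            omega
          · rw [hbt_gt t' (by omega)] at he
            have := bext_inj hbm hb0 (by omega) (by omega) he
            omega
        rw [hnot]
      · rw [Equiv.swap_apply_of_ne_of_ne
            (hbne' (t+1) q (by omega) (by omega) (by omega) (by omega) (by omega))
            (habne (t+1) (by omega)),
          Equiv.swap_apply_of_ne_of_ne
            (hbne' (t+1) (q+(m-1)) (by omega) (by omega) (by omega) (by omega) (by omega))
            (hbne' (t+1) (q+(m-1)+1) (by omega) (by omega) (by omega) (by omega) (by omega)),
          ← hbt_gt t (by omega), cycB_bext hbtmono hbtpos ht, hbt_gt (t+1) (by omega)]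
    · have hxnb : ∀ s, s ≤ h+1 → bext b s ≠ x := hnotb x hx
      have hfix1 : cycB 0 b x = x := cycB_fix (by rw [mem_blist_iff]; exact hx)
      rw [hfix1]
      by_cases hx2 : ∃ t, 1 ≤ t ∧ t ≤ k+1 ∧ aext a t = x
      · obtain ⟨t, ht1, ht2, rfl⟩ := hx2
        have hblock : ∀ l, l < m → t ≠ p + l := by
          intro l hl he
          exact hx ⟨q + l, by omega, by rw [← hab l hl, ← he]⟩
        by_cases c6 : t = p - 1
        · subst c6
          rw [Equiv.swap_apply_right]
          by_cases c7 : m = 1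
          · have e : q + (m-1) = q := by omega
            rw [e, Equiv.swap_apply_left, ← hbt_q, cycB_bext hbtmono hbtpos (by omega),
              hbt_gt (q+1) (by omega)]
          · rw [Equiv.swap_apply_of_ne_of_ne
                (hbne' q (q+(m-1)) (by omega) (by omega) (by omega) (by omega) (by omega))
                (hbne' q (q+(m-1)+1) (by omega) (by omega) (by omega) (by omega) (by omega))]
            have e1 : bext bt (q+1) = bext b q := by
              rw [hbt_mid (q+1) (by omega) (by omega), show q+1-1 = q from by omega]
            rw [← hbt_q, cycB_bext hbtmono hbtpos (by omega), e1]
        · have hnb : aext a t ∉ (0 :: List.ofFn b) := haB t ht1 ht2 hblock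
          have hne_s : ∀ s, s ≤ h+1 → bext b s ≠ aext a t := by
            intro s hs he
            rcases Nat.lt_or_ge h s with d | d
            · rw [bext_of_gt s d] at he
              exact hnb (mem_blist_iff.mpr ⟨0, by omega, by rw [bext_zero]; exact he⟩)
            · exact hnb (mem_blist_iff.mpr ⟨s, d, he⟩)
          have hfixbt : cycB 0 bt (aext a t) = aext a t := by
            apply cycB_fix
            rw [mem_blist_iff]
            rintro ⟨t', ht', he⟩
            rcases Nat.lt_or_ge t' q with d1 | d1
            · rw [hbt_lt t' d1] at he
              exact hne_s t' (by omega) he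
            by_cases d2 : t' = q
            · rw [d2, hbt_q] at he
              exact c6 (aext_inj ham hal (by omega) (by omega) ht1 ht2 he).symm
            by_cases d3 : t' ≤ q + (m-1)
            · rw [hbt_mid t' (by omega) d3] at he
              exact hne_s (t'-1) (by omega) he
            · rw [hbt_gt t' (by omega)] at he
              exact hne_s t' (by omega) he
          rw [Equiv.swap_apply_of_ne_of_ne (Ne.symm (hne_s q (by omega)))
              (fun he => c6 (aext_inj ham hal ht1 ht2 (by omega) (by omega) he)),
            Equiv.swap_apply_of_ne_of_ne (Ne.symm (hne_s (q+(m-1)) (by omega)))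
              (Ne.symm (hne_s (q+(m-1)+1) (by omega))),
            hfixbt]
      · have hxna : ∀ t, 1 ≤ t → t ≤ k+1 → aext a t ≠ x := by
          intro t h1 h2 he
          exact hx2 ⟨t, h1, h2, he⟩
        have hfixbt : cycB 0 bt x = x := by
          apply cycB_fix
          rw [mem_blist_iff]
          rintro ⟨t', ht', he⟩
          rcases Nat.lt_or_ge t' q with d1 | d1
          · rw [hbt_lt t' d1] at he
            exact hxnb t' (by omega) he
          by_cases d2 : t' = q
          · rw [d2, hbt_q] at he
            exact hxna (p-1) (by omega) (by omega) he
          by_cases d3 : t' ≤ q + (m-1)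
          · rw [hbt_mid t' (by omega) d3] at he
            exact hxnb (t'-1) (by omega) he
          · rw [hbt_gt t' (by omega)] at he
            exact hxnb t' (by omega) he
        rw [Equiv.swap_apply_of_ne_of_ne (Ne.symm (hxnb q (by omega)))
            (Ne.symm (hxna (p-1) (by omega) (by omega))),
          Equiv.swap_apply_of_ne_of_ne (Ne.symm (hxnb (q+(m-1)) (by omega)))
            (Ne.symm (hxnb (q+(m-1)+1) (by omega))),
          hfixbt]
  -- the commutation identity
  have hMul : Bt * cycA a = cycA a * cycB 0 b := by
    rw [hBtEq]
    refine Equiv.ext fun x => ?_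
    rw [Equiv.Perm.mul_apply, Equiv.Perm.mul_apply]
    by_cases hx : ∃ t, t ≤ h ∧ bext b t = x
    · obtain ⟨t, ht, rfl⟩ := hx
      rw [hAmap t ht, cycB_bext hbtmono hbtpos ht, cycB_bext hbm hb0 ht]
      rcases Nat.lt_or_ge h (t+1) with d | d
      · rw [bext_of_gt (t+1) (by omega), bext_of_gt (t+1) (by omega), cycA_fix h0A]
      · rw [hAmap (t+1) d]
    · have h1 : cycB 0 b x = x := cycB_fix (by rw [mem_blist_iff]; exact hx)
      rw [h1]
      apply cycB_fix
      rw [mem_blist_iff]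
      rintro ⟨t', ht', he⟩
      rw [← hAmap t' ht'] at he
      exact hx ⟨t', ht', (cycA a).injective he⟩
  -- condition (1)-(2)
  have hBsymmfix : ∀ t, 1 ≤ t → t ≤ k+1 → (∀ l, l < m → t ≠ p + l) →
      (cycB 0 b).symm (aext a t) = aext a t := by
    intro t h1 h2 h3
    rw [Equiv.symm_apply_eq]
    exact (cycB_fix (haB t h1 h2 h3)).symm
  have hBsymmb : ∀ s, 1 ≤ s → s ≤ h → (cycB 0 b).symm (bext b s) = bext b (s-1) := by
    intro s h1 h2
    rw [Equiv.symm_apply_eq, cycB_bext hbm hb0 (by omega)]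
    congr 1
    omega
  have hFnat : ∀ t, 1 ≤ t → t ≤ k → u.symm (aext a t) < u.symm (aext a (t+1)) := by
    intro t h1 h2
    by_cases c1 : t + 1 < p
    · have e1 := hBsymmfix t h1 (by omega) (fun l hl => by omega)
      have e2 := hBsymmfix (t+1) (by omega) (by omega) (fun l hl => by omega)
      have h3 := asnoc_nat_lt (f := fun x => u.symm ((cycB 0 b).symm x)) hG h1
        (show t < t+1 by omega) (by omega)
      rwa [e1, e2] at h3
    by_cases c2 : t + 1 = p
    · have e1 := hBsymmfix t h1 (by omega) (fun l hl => by omega)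
      have key1 := asnoc_nat_lt (f := fun x => u.symm ((cycB 0 b).symm x)) hG h1
        (show t < t+1 by omega) (by omega)
      rw [e1, c2, hab0, hBsymmb q (by omega) (by omega)] at key1
      have key2 := bcons_nat_lt (f := fun x => u.symm x) hU
        (show q - 1 < q by omega) (by omega)
      rw [← hab0, ← c2] at key2
      exact lt_trans key1 key2
    by_cases c3 : t < p + (m-1)
    · have e1 : aext a t = bext b (q + (t - p)) := by
        rw [← hab (t-p) (by omega)]
        congr 1
        omega
      have e2 : aext a (t+1) = bext b (q + (t-p+1)) := by
        rw [← hab (t-p+1) (by omega)]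
        congr 1
        omega
      rw [e1, e2]
      have h3 := bcons_nat_lt (f := fun x => u.symm x) hU
        (show q + (t-p) < q + (t-p+1) by omega) (by omega)
      exact h3
    by_cases c4 : t = p + (m-1)
    · subst c4
      exact hpos2
    · have e1 := hBsymmfix t h1 (by omega) (fun l hl => by omega)
      have e2 := hBsymmfix (t+1) (by omega) (by omega) (fun l hl => by omega)
      have h3 := asnoc_nat_lt (f := fun x => u.symm ((cycB 0 b).symm x)) hG h1
        (show t < t+1 by omega) (by omega)
      rwa [e1, e2] at h3
  have hDA : DCondA u v a := by
    refine ⟨ham, hal, ?_, ?_⟩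
    · rw [hveq]
      congr 1
      have e0 : asnoc a (0 : Fin (k+1)) = aext a 1 := by
        rw [asnoc_eq_aext]
        norm_num
      rw [e0]
      exact hBsymmfix 1 (by omega) (by omega) (fun l hl => by omega)
    · rw [Fin.strictMono_iff_lt_succ]
      intro idx
      have e1 : asnoc a idx.castSucc = aext a (idx.1+1) := by
        rw [asnoc_eq_aext, Fin.coe_castSucc]
      have e2 : asnoc a idx.succ = aext a (idx.1+1+1) := by
        rw [asnoc_eq_aext, Fin.val_succ]
      rw [e1, e2]
      exact hFnat (idx.1+1) (by omega) (by omega)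
  -- condition (3)-(4)
  have hkey : ∀ idx : Fin (h+1), (cycA a).symm (bcons 0 bt idx) = bcons 0 b idx := by
    intro idx
    rw [bcons_eq_bext, bcons_eq_bext]
    exact hAmap' idx.1 (by omega)
  have hDB : DCondB u v (cycA a) bt := by
    refine ⟨hbtmono, fun idx => ⟨hbtpos idx, hbtlast idx⟩, ?_, ?_⟩
    · simp only [hkey]
      exact hU
    · rw [hkey]
      exact hUlast
  refine ⟨⟨k, h, a, bt, rfl, hBtEq, hDA, hDB⟩, hMul, ?_⟩
  simp only [clen]
  rw [hBtEq, card_support_cycA ham hal hk1, card_support_cycB hbtmono hbtpos hh1]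
  omega

end DblShortcut
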